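/- Let 1<q<2<r and A,B>0, and define Ψ(t)=t²−A·t^q−B·t^r for t≥0. Then sup_{t≥0} Ψ(t) > 0 if and only if A^{r−2}·B^{2−q} < d(r,q) := (r−2)^{r−2}·(2−q)^{2−q}/(r−q)^{r−q}. -/

import Mathlib

open Real Set

-- bddAbove lemma
lemma bdd_aux (q r A B : ℝ) (hq : 0 < q) (hr : 2 < r) (hA : 0 < A) (hB : 0 < B) :
    BddAbove ((fun t : ℝ => t ^ (2:ℝ) - A * t ^ q - B * t ^ r) '' Set.Ici 0) := by
  have hr2 : (0:ℝ) < r - 2 := by linarith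
  set T : ℝ := max 1 (B ^ (-(1/(r-2)))) with hT
  have hT1 : (1:ℝ) ≤ T := le_max_left _ _
  have hT0 : (0:ℝ) ≤ T := by linarith
  refine ⟨T ^ (2:ℝ), ?_⟩
  rintro y ⟨t, ht, rfl⟩
  simp only [Set.mem_Ici] at ht
  rcases le_or_gt t T with h | h
  · have h1 : t ^ (2:ℝ) ≤ T ^ (2:ℝ) := Real.rpow_le_rpow ht h (by norm_num)
    have h2 : 0 ≤ A * t ^ q := mul_nonneg hA.le (Real.rpow_nonneg ht q)
    have h3 : 0 ≤ B * t ^ r := mul_nonneg hB.le (Real.rpow_nonneg ht r)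
    dsimp only
    linarith
  · -- t > T ≥ 1, show Ψ(t) ≤ 0 ≤ T^2
    have ht1 : (1:ℝ) ≤ t := le_of_lt (lt_of_le_of_lt hT1 h)
    have ht0 : (0:ℝ) < t := by linarith
    have hBt : 1 ≤ B * t ^ (r - 2) := by
      have hb : B ^ (-(1/(r-2))) ≤ t := le_of_lt (lt_of_le_of_lt (le_max_right _ _) h)
      have : (B ^ (-(1/(r-2)))) ^ (r-2) ≤ t ^ (r-2) :=
        Real.rpow_le_rpow (Real.rpow_nonneg hB.le _) hb hr2.le
      rw [← Real.rpow_mul hB.le] at this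
      have he : -(1/(r-2)) * (r-2) = -1 := by field_simp
      rw [he, Real.rpow_neg_one] at this
      calc (1:ℝ) = B * B⁻¹ := by field_simp
      _ ≤ B * t ^ (r-2) := by
        exact mul_le_mul_of_nonneg_left this hB.le
    have hkey : t ^ (2:ℝ) ≤ B * t ^ r := by
      have : t ^ r = t ^ (2:ℝ) * t ^ (r-2) := by
        rw [← Real.rpow_add ht0]; ring_nf
      rw [this]
      calc t ^ (2:ℝ) = t ^ (2:ℝ) * 1 := by ring
      _ ≤ t ^ (2:ℝ) * (B * t ^ (r-2)) := by
          exact mul_le_mul_of_nonneg_left hBt (Real.rpow_nonneg ht0.le _)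
      _ = B * (t ^ (2:ℝ) * t ^ (r-2)) := by ring
    have h2 : 0 ≤ A * t ^ q := mul_nonneg hA.le (Real.rpow_nonneg ht q)
    have hT2 : 0 ≤ T ^ (2:ℝ) := Real.rpow_nonneg hT0 _
    dsimp only
    linarith

lemma amgm_aux (q r A B t : ℝ) (hq1 : 1 < q) (hq2 : q < 2) (hr : 2 < r)
    (hA : 0 < A) (hB : 0 < B) (ht : 0 < t) :
    A ^ (r-2) * B ^ (2-q) * (r-q) ^ (r-q) / ((r-2) ^ (r-2) * (2-q) ^ (2-q)) ≤
      (A * t ^ (q-2) + B * t ^ (r-2)) ^ (r-q) := by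
  have hα : (0:ℝ) < 2 - q := by linarith
  have hβ : (0:ℝ) < r - 2 := by linarith
  have hs : (0:ℝ) < r - q := by linarith
  have hsne : r - q ≠ 0 := ne_of_gt hs
  have htq : (0:ℝ) < t ^ (q-2) := Real.rpow_pos_of_pos ht _
  have htr : (0:ℝ) < t ^ (r-2) := Real.rpow_pos_of_pos ht _
  have hw : (r-2)/(r-q) + (2-q)/(r-q) = 1 := by field_simp; ring
  have hp₁ : (0:ℝ) ≤ (r-q)/(r-2) * (A * t^(q-2)) := by positivity
  have hp₂ : (0:ℝ) ≤ (r-q)/(2-q) * (B * t^(r-2)) := by positivity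
  have h1 := Real.geom_mean_le_arith_mean2_weighted (by positivity) (by positivity) hp₁ hp₂ hw
  have heq : (r-2)/(r-q) * ((r-q)/(r-2) * (A * t^(q-2))) +
      (2-q)/(r-q) * ((r-q)/(2-q) * (B * t^(r-2))) = A * t^(q-2) + B * t^(r-2) := by
    field_simp
  rw [heq] at h1
  have h2 := Real.rpow_le_rpow (by positivity) h1 hs.le
  rw [Real.mul_rpow (Real.rpow_nonneg hp₁ _) (Real.rpow_nonneg hp₂ _),
      ← Real.rpow_mul hp₁, ← Real.rpow_mul hp₂,
      div_mul_cancel₀ _ hsne, div_mul_cancel₀ _ hsne] at h2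
  refine le_trans (le_of_eq ?_) h2
  rw [Real.mul_rpow (by positivity) (by positivity),
      Real.mul_rpow (by positivity) (by positivity),
      Real.mul_rpow (by positivity) (by positivity),
      Real.mul_rpow (by positivity) (by positivity),
      Real.div_rpow hs.le hβ.le, Real.div_rpow hs.le hα.le,
      ← Real.rpow_mul ht.le, ← Real.rpow_mul ht.le]
  have ht0 : t ^ ((q-2)*(r-2)) * t ^ ((r-2)*(2-q)) = 1 := by
    rw [← Real.rpow_add ht]
    have : (q-2)*(r-2) + (r-2)*(2-q) = 0 := by ring
    rw [this, Real.rpow_zero]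
  have hss : (r-q) ^ (r-2) * (r-q) ^ (2-q) = (r-q) ^ (r-q) := by
    rw [← Real.rpow_add hs]
    congr 1; ring
  have hb : (0:ℝ) < (r-2) ^ (r-2) := Real.rpow_pos_of_pos hβ _
  have ha : (0:ℝ) < (2-q) ^ (2-q) := Real.rpow_pos_of_pos hα _
  field_simp
  rw [mul_comm (r - 2) (q - 2)]
  linear_combination (-1:ℝ) * hss -
    ((r-q)^(r-2)*(r-q)^(2-q)) * ht0

lemma attain_aux (q r A B : ℝ) (hq1 : 1 < q) (hq2 : q < 2) (hr : 2 < r)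
    (hA : 0 < A) (hB : 0 < B) :
    ∃ t : ℝ, 0 < t ∧ (A * t ^ (q-2) + B * t ^ (r-2)) ^ (r-q) =
      A ^ (r-2) * B ^ (2-q) * (r-q) ^ (r-q) / ((r-2) ^ (r-2) * (2-q) ^ (2-q)) := by
  have hα : (0:ℝ) < 2 - q := by linarith
  have hβ : (0:ℝ) < r - 2 := by linarith
  have hs : (0:ℝ) < r - q := by linarith
  have hsne : r - q ≠ 0 := ne_of_gt hs
  set C : ℝ := A * (2-q) / (B * (r-2)) with hCdef
  have hC : 0 < C := by positivity
  refine ⟨C ^ (1/(r-q)), Real.rpow_pos_of_pos hC _, ?_⟩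
  set t : ℝ := C ^ (1/(r-q)) with htdef
  have ht : 0 < t := Real.rpow_pos_of_pos hC _
  have hts : t ^ (r-q) = C := by
    rw [htdef, ← Real.rpow_mul hC.le, one_div_mul_cancel hsne, Real.rpow_one]
  have htq2 : t ^ (q-2) = t ^ (r-2) * (B * (r-2)) / (A * (2-q)) := by
    have h1 : t ^ (q-2) = t ^ (r-2) / t ^ (r-q) := by
      rw [← Real.rpow_sub ht]; congr 1; ring
    rw [h1, hts, hCdef]
    field_simp
  have hf : A * t ^ (q-2) + B * t ^ (r-2) = B * t ^ (r-2) * (r-q) / (2-q) := by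
    rw [htq2]; field_simp; ring
  rw [hf]
  have htrs : (t ^ (r-2)) ^ (r-q) = C ^ (r-2) := by
    rw [← Real.rpow_mul ht.le, mul_comm, Real.rpow_mul ht.le, hts]
  have htr : (0:ℝ) < t ^ (r-2) := Real.rpow_pos_of_pos ht _
  rw [show B * t ^ (r-2) * (r-q) / (2-q) = B * t ^ (r-2) * ((r-q) / (2-q)) by ring,
      Real.mul_rpow (by positivity) (by positivity),
      Real.mul_rpow hB.le htr.le, htrs,
      Real.div_rpow hs.le hα.le, hCdef,
      Real.div_rpow (by positivity) (by positivity),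
      Real.mul_rpow hA.le hα.le, Real.mul_rpow hB.le hβ.le]
  have hBs : B ^ (r-q) = B ^ (r-2) * B ^ (2-q) := by
    rw [← Real.rpow_add hB]; congr 1; ring
  have hαs : (2-q) ^ (r-q) = (2-q) ^ (r-2) * (2-q) ^ (2-q) := by
    rw [← Real.rpow_add hα]; congr 1; ring
  rw [hBs, hαs]
  have h1 : (0:ℝ) < B ^ (r-2) := Real.rpow_pos_of_pos hB _
  have h2 : (0:ℝ) < (2-q) ^ (r-2) := Real.rpow_pos_of_pos hα _
  have h3 : (0:ℝ) < (r-2) ^ (r-2) := Real.rpow_pos_of_pos hβ _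
  have h4 : (0:ℝ) < (2-q) ^ (2-q) := Real.rpow_pos_of_pos hα _
  have h5 : (0:ℝ) < B ^ (2-q) := Real.rpow_pos_of_pos hB _
  field_simp

theorem stmt0 (q r A B : ℝ) (hq1 : 1 < q) (hq2 : q < 2) (hr : 2 < r)
    (hA : 0 < A) (hB : 0 < B) :
    0 < sSup ((fun t : ℝ => t ^ (2:ℝ) - A * t ^ q - B * t ^ r) '' Set.Ici 0) ↔
      A ^ (r - 2) * B ^ (2 - q) <
        (r - 2) ^ (r - 2) * (2 - q) ^ (2 - q) / (r - q) ^ (r - q) := by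
  have hα : (0:ℝ) < 2 - q := by linarith
  have hβ : (0:ℝ) < r - 2 := by linarith
  have hs : (0:ℝ) < r - q := by linarith
  have hss : (0:ℝ) < (r-q) ^ (r-q) := Real.rpow_pos_of_pos hs _
  have hbb : (0:ℝ) < (r-2) ^ (r-2) * (2-q) ^ (2-q) :=
    mul_pos (Real.rpow_pos_of_pos hβ _) (Real.rpow_pos_of_pos hα _)
  have hq0 : (0:ℝ) < q := by linarith
  constructor
  · intro h
    obtain ⟨y, ⟨t, ht, rfl⟩, hy⟩ :=
      exists_lt_of_lt_csSup (Set.Nonempty.image _ Set.nonempty_Ici) h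
    simp only [Set.mem_Ici] at ht
    dsimp only at hy
    have ht0 : 0 < t := by
      rcases ht.eq_or_lt with h0 | h0
      · exfalso
        rw [← h0, Real.zero_rpow (by norm_num : (2:ℝ) ≠ 0),
          Real.zero_rpow (ne_of_gt hq0), Real.zero_rpow (by positivity : r ≠ 0)] at hy
        simp at hy
      · exact h0
    -- Ψ(t) = t^2 (1 - f(t))
    have hid : t ^ (2:ℝ) - A * t ^ q - B * t ^ r =
        t ^ (2:ℝ) * (1 - (A * t ^ (q-2) + B * t ^ (r-2))) := by
      have h1 : t ^ q = t ^ (2:ℝ) * t ^ (q-2) := by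
        rw [← Real.rpow_add ht0]; congr 1; ring
      have h2 : t ^ r = t ^ (2:ℝ) * t ^ (r-2) := by
        rw [← Real.rpow_add ht0]; congr 1; ring
      rw [h1, h2]; ring
    rw [hid] at hy
    have ht2 : (0:ℝ) < t ^ (2:ℝ) := Real.rpow_pos_of_pos ht0 _
    have hf1 : A * t ^ (q-2) + B * t ^ (r-2) < 1 := by
      rcases mul_pos_iff.mp hy with ⟨_, h5⟩ | ⟨h5, _⟩
      · linarith
      · linarith
    have hfpos : (0:ℝ) ≤ A * t ^ (q-2) + B * t ^ (r-2) := by positivity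
    have h3 : (A * t ^ (q-2) + B * t ^ (r-2)) ^ (r-q) < 1 := by
      have := Real.rpow_lt_rpow hfpos hf1 hs
      rwa [Real.one_rpow] at this
    have h4 := lt_of_le_of_lt (amgm_aux q r A B t hq1 hq2 hr hA hB ht0) h3
    rw [div_lt_one hbb] at h4
    rw [lt_div_iff₀ hss]
    linarith
  · intro h
    obtain ⟨t, ht0, hteq⟩ := attain_aux q r A B hq1 hq2 hr hA hB
    have hconst : A ^ (r-2) * B ^ (2-q) * (r-q) ^ (r-q) /
        ((r-2) ^ (r-2) * (2-q) ^ (2-q)) < 1 := by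
      rw [div_lt_one hbb]
      rw [lt_div_iff₀ hss] at h
      linarith
    rw [← hteq] at hconst
    have hf1 : A * t ^ (q-2) + B * t ^ (r-2) < 1 := by
      by_contra hc
      push_neg at hc
      have : (1:ℝ) ≤ (A * t ^ (q-2) + B * t ^ (r-2)) ^ (r-q) :=
        Real.one_le_rpow hc hs.le
      linarith
    have ht2 : (0:ℝ) < t ^ (2:ℝ) := Real.rpow_pos_of_pos ht0 _
    have hid : t ^ (2:ℝ) - A * t ^ q - B * t ^ r =
        t ^ (2:ℝ) * (1 - (A * t ^ (q-2) + B * t ^ (r-2))) := by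
      have h1 : t ^ q = t ^ (2:ℝ) * t ^ (q-2) := by
        rw [← Real.rpow_add ht0]; congr 1; ring
      have h2 : t ^ r = t ^ (2:ℝ) * t ^ (r-2) := by
        rw [← Real.rpow_add ht0]; congr 1; ring
      rw [h1, h2]; ring
    have hΨ : 0 < t ^ (2:ℝ) - A * t ^ q - B * t ^ r := by
      rw [hid]; exact mul_pos ht2 (by linarith)
    calc (0:ℝ) < t ^ (2:ℝ) - A * t ^ q - B * t ^ r := hΨ
    _ ≤ sSup ((fun t : ℝ => t ^ (2:ℝ) - A * t ^ q - B * t ^ r) '' Set.Ici 0) :=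
      le_csSup (bdd_aux q r A B hq0 hr hA hB) ⟨t, ht0.le, rfl⟩
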